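/- Boundary inequalities for the posterior mean: assume the boundary condition (A3). Then for every probability vector π with σ(π, 1, u) > 0 and σ(π, Y_u, u) > 0 for u ∈ {1,2}: g'T(π, 1, 2) ≤ g'T(π, 1, 1) and g'T(π, Y_2, 2) ≥ g'T(π, Y_1, 1), where g'T(π, y, u) = Σ_i g_i T(π, y, u)_i. Consequently, if additionally each B(u) is TP2 so that y ↦ g'T(π, y, u) is nondecreasing, then {g'T(π, y, 1) : y ∈ 𝕐_1} is contained in the interval [g'T(π, 1, 2), g'T(π, Y_2, 2)]. -/
import Mathlib


open Finset

/-- One-step normalizer `σ(π, y) = Σ_i π_i B_{iy}`. -/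
def nrm1 {X Y : ℕ} (B : Fin X → Fin Y → ℝ) (π : Fin X → ℝ) (y : Fin Y) : ℝ :=
  ∑ i, π i * B i y

/-- Posterior mean `g'T(π, y) = Σ_i g_i π_i B_{iy} / σ(π, y)`. -/
noncomputable def postMean {X Y : ℕ} (B : Fin X → Fin Y → ℝ) (g : Fin X → ℝ)
    (π : Fin X → ℝ) (y : Fin Y) : ℝ :=
  (∑ i, g i * (π i * B i y)) / nrm1 B π y

/-- MLR-dominance comparison of weighted means. -/
lemma mlr_mean_le {X : ℕ} (g a b : Fin X → ℝ) (hg : Monotone g)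
    (ha : ∀ i, 0 ≤ a i) (hb : ∀ i, 0 ≤ b i)
    (hSa : 0 < ∑ i, a i) (hSb : 0 < ∑ i, b i)
    (h : ∀ i j : Fin X, i ≤ j → a j * b i ≤ a i * b j) :
    (∑ i, g i * a i) / (∑ i, a i) ≤ (∑ i, g i * b i) / (∑ i, b i) := by
  rw [div_le_div_iff₀ hSa hSb]
  have key : (0:ℝ) ≤ ∑ i, ∑ j, (g j - g i) * (a i * b j) := by
    have h2 : (0:ℝ) ≤ ∑ i, ∑ j, ((g j - g i) * (a i * b j) + (g i - g j) * (a j * b i)) := by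
      refine Finset.sum_nonneg fun i _ => Finset.sum_nonneg fun j _ => ?_
      have : (g j - g i) * (a i * b j) + (g i - g j) * (a j * b i)
          = (g j - g i) * (a i * b j - a j * b i) := by ring
      rw [this]
      rcases le_total i j with hij | hij
      · exact mul_nonneg (sub_nonneg.2 (hg hij)) (sub_nonneg.2 (h i j hij))
      · have h1 := sub_nonpos.2 (hg hij)
        have h2 := sub_nonpos.2 (h j i hij)
        nlinarith
    have h3 : ∑ i, ∑ j, (g i - g j) * (a j * b i)
        = ∑ i, ∑ j, (g j - g i) * (a i * b j) := Finset.sum_comm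
    have h4 : ∑ i, ∑ j, ((g j - g i) * (a i * b j) + (g i - g j) * (a j * b i))
        = 2 * ∑ i, ∑ j, (g j - g i) * (a i * b j) := by
      simp only [Finset.sum_add_distrib, h3]; ring
    linarith [h2, h4.symm ▸ h2]
  have e1 : (∑ i, g i * b i) * (∑ i, a i) = ∑ i, ∑ j, (g j * b j) * a i := by
    rw [Finset.sum_mul_sum]; exact Finset.sum_comm
  have e2 : (∑ i, g i * a i) * (∑ i, b i) = ∑ i, ∑ j, (g i * a i) * b j := by
    rw [Finset.sum_mul_sum]
  have expand : (∑ i, g i * b i) * (∑ i, a i) - (∑ i, g i * a i) * (∑ i, b i)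
      = ∑ i, ∑ j, (g j - g i) * (a i * b j) := by
    rw [e1, e2, ← Finset.sum_sub_distrib]
    refine Finset.sum_congr rfl fun i _ => ?_
    rw [← Finset.sum_sub_distrib]
    exact Finset.sum_congr rfl fun j _ => by ring
  linarith [expand ▸ key]

/-- **Boundary inequalities for the posterior mean.**  Under the boundary
condition (A3), `g'T(π,1,2) ≤ g'T(π,1,1)` and `g'T(π,Y₂,2) ≥ g'T(π,Y₁,1)`.
Consequently, if additionally both kernels are TP2 (and all normalizers are
positive) then `y ↦ g'T(π,y,u)` is nondecreasing and every posterior mean of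
sensor 1 lies in the interval `[g'T(π,1,2), g'T(π,Y₂,2)]`. -/
theorem stmt_14 (X Y₁ Y₂ : ℕ) (hY₁ : 0 < Y₁) (hY₂ : 0 < Y₂)
    (B₁ : Fin X → Fin Y₁ → ℝ) (B₂ : Fin X → Fin Y₂ → ℝ)
    (hB₁nn : ∀ x y, 0 ≤ B₁ x y) (hB₂nn : ∀ x y, 0 ≤ B₂ x y)
    (hB₁row : ∀ x, ∑ y, B₁ x y = 1) (hB₂row : ∀ x, ∑ y, B₂ x y = 1)
    (g : Fin X → ℝ) (hg : StrictMono g)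
    -- (A3): boundary conditions
    (hA3a : ∀ x x' : Fin X, x ≤ x' →
      B₁ x ⟨0, hY₁⟩ * B₂ x' ⟨0, hY₂⟩ ≤ B₂ x ⟨0, hY₂⟩ * B₁ x' ⟨0, hY₁⟩)
    (hA3b : ∀ x x' : Fin X, x ≤ x' →
      B₂ x ⟨Y₂ - 1, Nat.sub_lt hY₂ Nat.one_pos⟩ * B₁ x' ⟨Y₁ - 1, Nat.sub_lt hY₁ Nat.one_pos⟩ ≤
        B₁ x ⟨Y₁ - 1, Nat.sub_lt hY₁ Nat.one_pos⟩ * B₂ x' ⟨Y₂ - 1, Nat.sub_lt hY₂ Nat.one_pos⟩)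
    -- probability vector with positive boundary normalizers
    (π : Fin X → ℝ) (hπnn : ∀ i, 0 ≤ π i) (hπ : ∑ i, π i = 1)
    (hσ₁a : 0 < nrm1 B₁ π ⟨0, hY₁⟩)
    (hσ₁b : 0 < nrm1 B₁ π ⟨Y₁ - 1, Nat.sub_lt hY₁ Nat.one_pos⟩)
    (hσ₂a : 0 < nrm1 B₂ π ⟨0, hY₂⟩)
    (hσ₂b : 0 < nrm1 B₂ π ⟨Y₂ - 1, Nat.sub_lt hY₂ Nat.one_pos⟩) :
    (postMean B₂ g π ⟨0, hY₂⟩ ≤ postMean B₁ g π ⟨0, hY₁⟩ ∧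
      postMean B₁ g π ⟨Y₁ - 1, Nat.sub_lt hY₁ Nat.one_pos⟩ ≤
        postMean B₂ g π ⟨Y₂ - 1, Nat.sub_lt hY₂ Nat.one_pos⟩) ∧
    ((∀ (x x' : Fin X) (y y' : Fin Y₁), x ≤ x' → y ≤ y' →
        B₁ x y' * B₁ x' y ≤ B₁ x y * B₁ x' y') →
      (∀ (x x' : Fin X) (y y' : Fin Y₂), x ≤ x' → y ≤ y' →
        B₂ x y' * B₂ x' y ≤ B₂ x y * B₂ x' y') →
      (∀ y : Fin Y₁, 0 < nrm1 B₁ π y) → (∀ y : Fin Y₂, 0 < nrm1 B₂ π y) →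
      Monotone (postMean B₁ g π) ∧ Monotone (postMean B₂ g π) ∧
      ∀ y : Fin Y₁, postMean B₁ g π y ∈
        Set.Icc (postMean B₂ g π ⟨0, hY₂⟩)
          (postMean B₂ g π ⟨Y₂ - 1, Nat.sub_lt hY₂ Nat.one_pos⟩)) := by
  have main : ∀ {Ya Yb : ℕ} (Ba : Fin X → Fin Ya → ℝ) (Bb : Fin X → Fin Yb → ℝ)
      (ya : Fin Ya) (yb : Fin Yb),
      (∀ i, 0 ≤ Ba i ya) → (∀ i, 0 ≤ Bb i yb) →
      0 < nrm1 Ba π ya → 0 < nrm1 Bb π yb →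
      (∀ i j : Fin X, i ≤ j → Ba j ya * Bb i yb ≤ Ba i ya * Bb j yb) →
      postMean Ba g π ya ≤ postMean Bb g π yb := by
    intro Ya Yb Ba Bb ya yb hBa hBb hsa hsb hcmp
    have hnn : ∀ (i j : Fin X), i ≤ j →
        π j * Ba j ya * (π i * Bb i yb) ≤ π i * Ba i ya * (π j * Bb j yb) := by
      intro i j hij
      have h' := mul_le_mul_of_nonneg_left (hcmp i j hij)
        (mul_nonneg (hπnn i) (hπnn j))
      calc π j * Ba j ya * (π i * Bb i yb)
          = π i * π j * (Ba j ya * Bb i yb) := by ring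
        _ ≤ π i * π j * (Ba i ya * Bb j yb) := h'
        _ = π i * Ba i ya * (π j * Bb j yb) := by ring
    exact mlr_mean_le g (fun i => π i * Ba i ya) (fun i => π i * Bb i yb)
      hg.monotone (fun i => mul_nonneg (hπnn i) (hBa i))
      (fun i => mul_nonneg (hπnn i) (hBb i)) hsa hsb hnn
  constructor
  · constructor
    · refine main B₂ B₁ _ _ (fun i => hB₂nn i _) (fun i => hB₁nn i _) hσ₂a hσ₁a fun i j hij => ?_
      calc B₂ j ⟨0, hY₂⟩ * B₁ i ⟨0, hY₁⟩
          = B₁ i ⟨0, hY₁⟩ * B₂ j ⟨0, hY₂⟩ := mul_comm _ _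
        _ ≤ B₂ i ⟨0, hY₂⟩ * B₁ j ⟨0, hY₁⟩ := hA3a i j hij
    · refine main B₁ B₂ _ _ (fun i => hB₁nn i _) (fun i => hB₂nn i _) hσ₁b hσ₂b fun i j hij => ?_
      calc B₁ j _ * B₂ i _ = B₂ i _ * B₁ j _ := mul_comm _ _
        _ ≤ B₁ i _ * B₂ j _ := hA3b i j hij
  · intro hTP₁ hTP₂ hpos₁ hpos₂
    have mono₁ : Monotone (postMean B₁ g π) := by
      intro y y' hyy'
      refine main B₁ B₁ y y' (fun i => hB₁nn i _) (fun i => hB₁nn i _) (hpos₁ y) (hpos₁ y') fun i j hij => ?_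
      calc B₁ j y * B₁ i y' = B₁ i y' * B₁ j y := mul_comm _ _
        _ ≤ B₁ i y * B₁ j y' := hTP₁ i j y y' hij hyy'
    have mono₂ : Monotone (postMean B₂ g π) := by
      intro y y' hyy'
      refine main B₂ B₂ y y' (fun i => hB₂nn i _) (fun i => hB₂nn i _) (hpos₂ y) (hpos₂ y') fun i j hij => ?_
      calc B₂ j y * B₂ i y' = B₂ i y' * B₂ j y := mul_comm _ _
        _ ≤ B₂ i y * B₂ j y' := hTP₂ i j y y' hij hyy'
    refine ⟨mono₁, mono₂, fun y => ?_⟩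
    have hy0 : (⟨0, hY₁⟩ : Fin Y₁) ≤ y := by
      simp [Fin.le_def]
    have hyT : y ≤ (⟨Y₁ - 1, Nat.sub_lt hY₁ Nat.one_pos⟩ : Fin Y₁) := by
      simp only [Fin.le_def, Fin.val_mk]; have := y.isLt; omega
    have lower : postMean B₂ g π ⟨0, hY₂⟩ ≤ postMean B₁ g π y := by
      refine le_trans ?_ (mono₁ hy0)
      refine main B₂ B₁ _ _ (fun i => hB₂nn i _) (fun i => hB₁nn i _) hσ₂a hσ₁a fun i j hij => ?_
      calc B₂ j ⟨0, hY₂⟩ * B₁ i ⟨0, hY₁⟩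
          = B₁ i ⟨0, hY₁⟩ * B₂ j ⟨0, hY₂⟩ := mul_comm _ _
        _ ≤ B₂ i ⟨0, hY₂⟩ * B₁ j ⟨0, hY₁⟩ := hA3a i j hij
    have upper : postMean B₁ g π y ≤ postMean B₂ g π ⟨Y₂ - 1, Nat.sub_lt hY₂ Nat.one_pos⟩ := by
      refine le_trans (mono₁ hyT) ?_
      refine main B₁ B₂ _ _ (fun i => hB₁nn i _) (fun i => hB₂nn i _) hσ₁b hσ₂b fun i j hij => ?_
      calc B₁ j _ * B₂ i _ = B₂ i _ * B₁ j _ := mul_comm _ _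
        _ ≤ B₁ i _ * B₂ j _ := hA3b i j hij
    exact ⟨lower, upper⟩
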